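/- arXiv:2408.10522 — 3 statements merged into one kernel-verified Lean document; each statement's English description precedes it below -/
import Mathlib

section
/- Let V ∈ ℂ^{K×K} be a Toeplitz matrix with entries V(i,l) = v_{i−l}, where v_m ≠ 0 if and only if m ≡ 1 (mod N). If K is not a multiple of N (i.e., K = iN + j with 1 ≤ j ≤ N−1), then V is singular (det V = 0). -/
theorem stmt6 (K N : ℕ) (hN : 2 ≤ N) (hKN : N < K) (hdvd : ¬ N ∣ K)
    (v : ℤ → ℂ) (hv : ∀ m : ℤ, v m ≠ 0 ↔ m ≡ 1 [ZMOD (N : ℤ)])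
    (V : Matrix (Fin K) (Fin K) ℂ)
    (hV : ∀ i l : Fin K, V i l = v ((i : ℤ) - (l : ℤ))) :
    V.det = 0 := by
  haveI : NeZero N := ⟨by omega⟩
  rw [Matrix.det_apply]
  apply Finset.sum_eq_zero
  intro σ _
  suffices h : (∏ i, V (σ i) i) = 0 by rw [h, smul_zero]
  by_contra h0
  have hfac : ∀ l : Fin K, V (σ l) l ≠ 0 := by
    intro l hl
    exact h0 (Finset.prod_eq_zero (Finset.mem_univ l) hl)
  have hmod : ∀ l : Fin K, (((σ l : ℕ) : ZMod N)) = ((l : ℕ) : ZMod N) + 1 := by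
    intro l
    have h1 : ((σ l : ℤ) - (l : ℤ)) ≡ 1 [ZMOD (N : ℤ)] := by
      rw [← hv]; rw [← hV]; exact hfac l
    have h2 : ((((σ l : ℤ) - (l : ℤ)) : ℤ) : ZMod N) = ((1 : ℤ) : ZMod N) := by
      exact_mod_cast (ZMod.intCast_eq_intCast_iff _ _ _).mpr h1
    push_cast at h2
    linear_combination h2
  have hsum : ∑ l : Fin K, ((l : ℕ) : ZMod N)
      = ∑ l : Fin K, (((l : ℕ) : ZMod N) + 1) := by
    rw [← Equiv.sum_comp σ (fun l : Fin K => ((l : ℕ) : ZMod N))]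
    exact Finset.sum_congr rfl fun l _ => hmod l
  rw [Finset.sum_add_distrib] at hsum
  simp only [Finset.sum_const, Finset.card_univ, Fintype.card_fin, nsmul_eq_mul,
    mul_one, left_eq_add] at hsum
  exact hdvd ((ZMod.natCast_eq_zero_iff K N).mp hsum)
end

section
/- Let V be a K×K Toeplitz matrix V(i,l) = v_{i−l} with distinct values v_{−(K−1)}, ..., v_0, ..., v_{K−1} (all pairwise different). If P is a permutation matrix such that VP is also Toeplitz, then P is the identity. (Uniqueness of the column ordering recovering the Toeplitz structure.) -/
theorem stmt15 (K : ℕ) (hK : 2 ≤ K) (v : ℤ → ℂ)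
    (hv : ∀ a b : ℤ, |a| ≤ (K : ℤ) - 1 → |b| ≤ (K : ℤ) - 1 → v a = v b → a = b)
    (V : Matrix (Fin K) (Fin K) ℂ)
    (hV : ∀ i l : Fin K, V i l = v ((i : ℤ) - (l : ℤ)))
    (σ : Equiv.Perm (Fin K)) (w : ℤ → ℂ)
    (hw : ∀ i l : Fin K, V i (σ l) = w ((i : ℤ) - (l : ℤ))) :
    σ = Equiv.refl (Fin K) := by
  have z : Fin K := ⟨0, by omega⟩
  have key : ∀ l : Fin K, (l : ℤ) - (σ l : ℤ) = (z : ℤ) - (σ z : ℤ) := by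
    intro l
    have h1 := hw l l
    have h2 := hw z z
    rw [hV] at h1 h2
    simp only [sub_self] at h1 h2
    have hl := (σ l).isLt
    have hl' := l.isLt
    have hz := (σ z).isLt
    have hz' := z.isLt
    exact hv _ _ (by rw [abs_le]; omega) (by rw [abs_le]; omega) (h1.trans h2.symm)
  have hsum : ∑ l : Fin K, ((l : ℤ) - (σ l : ℤ)) = 0 := by
    rw [Finset.sum_sub_distrib]
    rw [Equiv.sum_comp σ (fun i : Fin K => (i : ℤ))]
    ring
  have hconst : ∑ l : Fin K, ((l : ℤ) - (σ l : ℤ)) = K * ((z : ℤ) - (σ z : ℤ)) := by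
    rw [Finset.sum_congr rfl (fun l _ => key l)]
    simp [mul_comm]
    ring
  have hK0 : (K : ℤ) ≠ 0 := by positivity
  have hd : (z : ℤ) - (σ z : ℤ) = 0 := by
    have := hsum.symm.trans hconst
    exact (mul_eq_zero.mp this.symm).resolve_left hK0
  ext l
  simp only [Equiv.refl_apply]
  have := key l
  rw [hd] at this
  omega
end

section
/- For N = 4 antennas, K = 4 subcarriers, φ = 2/N = 1/2, and BPSK symbols, the two parameter configurations (Δτ = 1/4, τ^o = (3/4, 1/4, 2/4, 0), s = (+1,−1,−1,+1)) and (Δτ = 3/4, τ^o = (0, 2/4, 3/4, 1/4), s = (−1,+1,+1,−1)) yield the same observation vector y = V(Δτ, τ^o, φ)·s, where V is the Toeplitz mixing matrix built from V_m = Σ_{n=1}^4 Δτ·sinc(mπΔτ)·e^{−jmπ(2τ_n^o+Δτ)}·e^{j(n−1)πφ} for m = i − l, scaled by 1/√(NK). -/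
open scoped BigOperators

noncomputable def sinc (x : ℝ) : ℝ := if x = 0 then 1 else Real.sin x / x

/-- Harmonic coefficient V_m of the TMA with N = 4 antennas, common ON duration `Δτ`,
ON instants `τ`, and angular parameter `φ`. -/
noncomputable def Vharm (Δτ : ℝ) (τ : Fin 4 → ℝ) (φ : ℝ) (m : ℤ) : ℂ :=
  ∑ n : Fin 4,
    (Δτ : ℂ) * ((sinc ((m : ℝ) * Real.pi * Δτ) : ℝ) : ℂ) *
      Complex.exp (-Complex.I * (m : ℂ) * (Real.pi : ℂ) * (2 * (τ n : ℂ) + (Δτ : ℂ))) *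
      Complex.exp (Complex.I * ((n : ℕ) : ℂ) * (Real.pi : ℂ) * (φ : ℂ))

/-- The 4×4 Toeplitz mixing matrix built from the harmonics, scaled by 1/√(NK) = 1/√16. -/
noncomputable def Vmat (Δτ : ℝ) (τ : Fin 4 → ℝ) (φ : ℝ) : Matrix (Fin 4) (Fin 4) ℂ :=
  Matrix.of fun i l : Fin 4 => Vharm Δτ τ φ ((i : ℤ) - (l : ℤ)) / (Real.sqrt 16 : ℂ)

lemma gexp0 : Complex.exp (Complex.I * (0:ℂ) * (Real.pi:ℂ) * ((1/2:ℝ):ℂ)) = 1 := by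
  norm_num

lemma gexp1 : Complex.exp (Complex.I * (1:ℂ) * (Real.pi:ℂ) * ((1/2:ℝ):ℂ)) = Complex.I := by
  rw [show Complex.I * (1:ℂ) * (Real.pi:ℂ) * ((1/2:ℝ):ℂ) = ((Real.pi:ℂ)/2) * Complex.I by
    push_cast; ring, Complex.exp_mul_I, Complex.cos_pi_div_two, Complex.sin_pi_div_two]
  ring

lemma gexp2 : Complex.exp (Complex.I * (2:ℂ) * (Real.pi:ℂ) * ((1/2:ℝ):ℂ)) = -1 := by
  rw [show Complex.I * (2:ℂ) * (Real.pi:ℂ) * ((1/2:ℝ):ℂ) = (Real.pi:ℂ) * Complex.I by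
    push_cast; ring, Complex.exp_pi_mul_I]

lemma gexp3 : Complex.exp (Complex.I * (3:ℂ) * (Real.pi:ℂ) * ((1/2:ℝ):ℂ)) = -Complex.I := by
  rw [show Complex.I * (3:ℂ) * (Real.pi:ℂ) * ((1/2:ℝ):ℂ)
      = (Real.pi:ℂ) * Complex.I + ((Real.pi:ℂ)/2) * Complex.I by push_cast; ring,
    Complex.exp_add, Complex.exp_pi_mul_I, Complex.exp_mul_I, Complex.cos_pi_div_two,
    Complex.sin_pi_div_two]
  ring

lemma key (m : ℤ) : Vharm (1/4) ![3/4, 1/4, 2/4, 0] (1/2) m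
    = - Vharm (3/4) ![0, 2/4, 3/4, 1/4] (1/2) m := by
  simp only [Vharm, Fin.sum_univ_four, Matrix.cons_val_zero, Matrix.cons_val_one,
    Matrix.head_cons, Matrix.cons_val_two, Matrix.tail_cons, Matrix.cons_val_three]
  set c : ℂ := Complex.exp (-Complex.I * (m:ℂ) * (Real.pi:ℂ) / 4) with hc
  have hkey : ∀ (a b : ℝ) (k : ℕ), 2*a + b = (k:ℝ)/4 →
      Complex.exp (-Complex.I * (m:ℂ) * (Real.pi:ℂ) * (2 * ((a:ℝ):ℂ) + ((b:ℝ):ℂ))) = c ^ k := by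
    intro a b k h
    rw [hc, ← Complex.exp_nat_mul]
    congr 1
    have h' := congrArg (Complex.ofReal) h
    push_cast at h'
    rw [show (2 : ℂ) * (a:ℂ) + (b:ℂ) = (k:ℂ)/4 from h']
    ring
  rw [hkey (3/4) (1/4) 7 (by norm_num), hkey (1/4) (1/4) 3 (by norm_num),
    hkey (2/4) (1/4) 5 (by norm_num), hkey 0 (1/4) 1 (by norm_num),
    hkey 0 (3/4) 3 (by norm_num), hkey (2/4) (3/4) 7 (by norm_num),
    hkey (3/4) (3/4) 9 (by norm_num), hkey (1/4) (3/4) 5 (by norm_num)]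
  simp only [show ((((0:Fin 4):ℕ)):ℂ) = 0 by norm_num, show ((((1:Fin 4):ℕ)):ℂ) = 1 by norm_num,
    show ((((2:Fin 4):ℕ)):ℂ) = 2 by norm_num, show ((((3:Fin 4):ℕ)):ℂ) = 3 by norm_cast]
  rw [gexp0, gexp1, gexp2, gexp3]
  rcases eq_or_ne m 0 with hm | hm
  · subst hm
    have hc1 : c = 1 := by rw [hc]; norm_num
    rw [hc1]
    norm_num [sinc]
  · have h8 : c ^ (8:ℕ) = 1 := by
      rw [hc, ← Complex.exp_nat_mul,
        show ((8:ℕ):ℂ) * (-Complex.I * (m:ℂ) * (Real.pi:ℂ) / 4)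
          = ((-m : ℤ) : ℂ) * (2 * (Real.pi:ℂ) * Complex.I) by push_cast; ring]
      exact Complex.exp_int_mul_two_pi_mul_I (-m)
    have hmπ : (m:ℝ) * Real.pi ≠ 0 :=
      mul_ne_zero (Int.cast_ne_zero.mpr hm) Real.pi_ne_zero
    have hs : sinc ((m:ℝ) * Real.pi * (3/4))
        = -((-1:ℝ)^m) * sinc ((m:ℝ) * Real.pi * (1/4)) / 3 := by
      have h1 : (m:ℝ) * Real.pi * (3/4) ≠ 0 := mul_ne_zero hmπ (by norm_num)
      have h2 : (m:ℝ) * Real.pi * (1/4) ≠ 0 := mul_ne_zero hmπ (by norm_num)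
      have hsin : Real.sin ((m:ℝ) * Real.pi * (3/4))
          = -((-1:ℝ)^m * Real.sin ((m:ℝ) * Real.pi * (1/4))) := by
        rw [show (m:ℝ) * Real.pi * (3/4) = (m:ℝ) * Real.pi - (m:ℝ) * Real.pi * (1/4) by ring,
          Real.sin_int_mul_pi_sub]
      rw [sinc, sinc, if_neg h1, if_neg h2, hsin]
      field_simp
    rw [hs]
    have hc4 : ((-1:ℂ))^m = c ^ (4:ℕ) := by
      rw [hc, ← Complex.exp_nat_mul,
        show ((4:ℕ):ℂ) * (-Complex.I * (m:ℂ) * (Real.pi:ℂ) / 4)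
          = (m:ℤ) * (-((Real.pi:ℂ) * Complex.I)) by push_cast; ring,
        Complex.exp_int_mul]
      congr 1
      rw [Complex.exp_neg, Complex.exp_pi_mul_I]
      norm_num
    push_cast
    rw [hc4]
    linear_combination (-((((sinc ((m:ℝ) * Real.pi * (1/4)) : ℝ)):ℂ)/4)
      * (Complex.I * c^3 - c^5 - Complex.I * c)) * h8

theorem stmt18 :
    (Vmat (1/4) ![3/4, 1/4, 2/4, 0] (1/2)).mulVec ![1, -1, -1, 1]
      = (Vmat (3/4) ![0, 2/4, 3/4, 1/4] (1/2)).mulVec ![-1, 1, 1, -1] := by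

  funext i
  simp only [Matrix.mulVec, Fin.sum_univ_four, Vmat, Matrix.of_apply, dotProduct,
    Matrix.cons_val_zero, Matrix.cons_val_one, Matrix.head_cons, Matrix.cons_val_two,
    Matrix.tail_cons, Matrix.cons_val_three, key]
  ring
end
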